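/- Weak duality: Let X be a Hermitian n×n matrix and δ a real number such that X − p_i ρ_i is positive semidefinite for every 1 ≤ i ≤ m and X − δΔ is positive semidefinite. Then for every measurement {Π_i}_{i=0}^m, Tr(X) − δ·P_I({Π_i}) − P_D({Π_i}) = Σ_{i=1}^m Tr(Π_i(X − p_i ρ_i)) + Tr(Π_0(X − δΔ)) ≥ 0; in particular P_D({Π_i}) ≤ Tr(X) − δ·P_I({Π_i}). -/

import Mathlib

open Matrix BigOperators ComplexOrder

open scoped MatrixOrder in
set_option maxHeartbeats 1000000 in
lemma trace_mul_psd_re_nonneg {n : ℕ} {A B : Matrix (Fin n) (Fin n) ℂ}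
    (hA : A.PosSemidef) (hB : B.PosSemidef) : 0 ≤ ((A * B).trace).re := by
  have hs := (CFC.sqrt_nonneg A).posSemidef
  have : A * B = CFC.sqrt A * (CFC.sqrt A * B) := by
    rw [← mul_assoc, CFC.sqrt_mul_sqrt_self A hA.nonneg]
  rw [this, Matrix.trace_mul_comm, mul_assoc]
  have hpsd : (CFC.sqrt A * B * CFC.sqrt A).PosSemidef := by
    have := hB.mul_mul_conjTranspose_same (CFC.sqrt A)
    rwa [hs.1.eq] at this
  rw [Matrix.trace]
  simp only [Complex.re_sum]
  refine Finset.sum_nonneg fun j _ => ?_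
  have := hpsd.re_dotProduct_nonneg (Pi.single j 1)
  simpa [Matrix.mulVec_single, dotProduct, Pi.single_apply, Matrix.diag, mul_assoc] using this

/-- Weak duality for the quantum detection problem with inconclusive results. -/
theorem stmt_1 {n m : ℕ}
    (ρ : Fin m → Matrix (Fin n) (Fin n) ℂ) (p : Fin m → ℝ)
    (hρpsd : ∀ i, (ρ i).PosSemidef) (hρtr : ∀ i, (ρ i).trace = 1)
    (hp : ∀ i, 0 < p i) (hpsum : ∑ i, p i = 1)
    (Δ : Matrix (Fin n) (Fin n) ℂ) (hΔ : Δ = ∑ i, (p i : ℂ) • ρ i)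
    -- the dual feasible point
    (X : Matrix (Fin n) (Fin n) ℂ) (hX : X.IsHermitian) (δ : ℝ)
    (hfeas1 : ∀ i, (X - (p i : ℂ) • ρ i).PosSemidef)
    (hfeas2 : (X - (δ : ℂ) • Δ).PosSemidef)
    -- an arbitrary measurement
    (M0 : Matrix (Fin n) (Fin n) ℂ) (M : Fin m → Matrix (Fin n) (Fin n) ℂ)
    (hM0 : M0.PosSemidef) (hM : ∀ i, (M i).PosSemidef)
    (hMsum : M0 + ∑ i, M i = 1) :
    X.trace.re - δ * ((Δ * M0).trace).re - ∑ i, p i * ((ρ i * M i).trace).re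
      = ∑ i, ((M i * (X - (p i : ℂ) • ρ i)).trace).re
          + ((M0 * (X - (δ : ℂ) • Δ)).trace).re ∧
    0 ≤ ∑ i, ((M i * (X - (p i : ℂ) • ρ i)).trace).re
          + ((M0 * (X - (δ : ℂ) • Δ)).trace).re ∧
    ∑ i, p i * ((ρ i * M i).trace).re ≤ X.trace.re - δ * ((Δ * M0).trace).re := by
  have key : (∑ i, (M i * (X - (p i : ℂ) • ρ i)).trace)
      + (M0 * (X - (δ : ℂ) • Δ)).trace
      = X.trace - (δ : ℂ) * (Δ * M0).trace - ∑ i, (p i : ℂ) * (ρ i * M i).trace := by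
    have expand : ∀ i, (M i * (X - (p i : ℂ) • ρ i)).trace
        = (M i * X).trace - (p i : ℂ) * (ρ i * M i).trace := by
      intro i
      rw [Matrix.mul_sub, Matrix.trace_sub, Matrix.mul_smul, Matrix.trace_smul,
        Matrix.trace_mul_comm (M i) (ρ i), smul_eq_mul]
    have expand0 : (M0 * (X - (δ : ℂ) • Δ)).trace
        = (M0 * X).trace - (δ : ℂ) * (Δ * M0).trace := by
      rw [Matrix.mul_sub, Matrix.trace_sub, Matrix.mul_smul, Matrix.trace_smul,
        Matrix.trace_mul_comm M0 Δ, smul_eq_mul]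
    simp only [expand, expand0, Finset.sum_sub_distrib]
    have hXtr : (∑ i, (M i * X).trace) + (M0 * X).trace = X.trace := by
      rw [← Matrix.trace_sum, ← Matrix.trace_add, ← Finset.sum_mul, ← Matrix.add_mul,
        add_comm (∑ i, M i) M0, hMsum, Matrix.one_mul]
    ring_nf
    ring_nf at hXtr
    linear_combination hXtr
  have keyre := congrArg Complex.re key
  simp only [Complex.add_re, Complex.sub_re, Complex.mul_re, Complex.ofReal_re,
    Complex.ofReal_im, Complex.re_sum, zero_mul, sub_zero] at keyre
  have eq1 : X.trace.re - δ * ((Δ * M0).trace).re - ∑ i, p i * ((ρ i * M i).trace).re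
      = ∑ i, ((M i * (X - (p i : ℂ) • ρ i)).trace).re
          + ((M0 * (X - (δ : ℂ) • Δ)).trace).re := by
    rw [keyre]
  have nonneg : 0 ≤ ∑ i, ((M i * (X - (p i : ℂ) • ρ i)).trace).re
      + ((M0 * (X - (δ : ℂ) • Δ)).trace).re := by
    apply add_nonneg
    · exact Finset.sum_nonneg fun i _ => trace_mul_psd_re_nonneg (hM i) (hfeas1 i)
    · exact trace_mul_psd_re_nonneg hM0 hfeas2
  exact ⟨eq1, nonneg, by linarith [eq1 ▸ nonneg]⟩
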